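/- Let s_1 < s_2 < … < s_k be real numbers with s_{i+1} − s_i ≤ ε for all i, and let ℓ : [s_1, s_k] → ℝ be α-strongly convex, i.e., the function x ↦ ℓ(x) − (α/2)x² is convex. Define the piecewise-linearization ℓ̇ : [s_1, s_k] → ℝ by ℓ̇(x) = ℓ(s_i) + ((ℓ(s_{i+1}) − ℓ(s_i))/(s_{i+1} − s_i))·(x − s_i) for x ∈ [s_i, s_{i+1}]. Then ℓ̇ is (α,ε)-nearly strongly convex: for all x, y ∈ [s_1, s_k] and every subgradient g of ℓ̇ at x (i.e., every g ∈ ℝ with ℓ̇(z) ≥ ℓ̇(x) + g·(z − x) for all z ∈ [s_1, s_k]), we have ℓ̇(y) − ℓ̇(x) − g·(y − x) ≥ (α/2)·(max(|y − x| − ε, 0))². -/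

import Mathlib

private lemma pl_key_right {α : ℝ} {S : Set ℝ} {ℓ : ℝ → ℝ}
    (hsc : ConvexOn ℝ S (fun z => ℓ z - α / 2 * z ^ 2))
    {A A' w : ℝ} (hA : A ∈ S) (hA' : A' ∈ S) (hw : w ∈ S)
    (h1 : A < A') (h2 : A' ≤ w) :
    ℓ A' + (ℓ A' - ℓ A) / (A' - A) * (w - A') + α / 2 * (w - A') * (w - A) ≤ ℓ w := by
  rcases eq_or_lt_of_le h2 with rfl | h2
  · simp
  have hAA : (0:ℝ) < A' - A := by linarith
  have hwA : (0:ℝ) < w - A' := by linarith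
  have hsec := hsc.secant_mono hA' hA hw (by intro h; rw [h] at h1; exact lt_irrefl _ h1)
    (by intro h; rw [h] at h2; exact lt_irrefl _ h2) (by linarith)
  have e1 : ((ℓ A - α / 2 * A ^ 2) - (ℓ A' - α / 2 * A' ^ 2)) / (A - A')
      = ((ℓ A' - α / 2 * A' ^ 2) - (ℓ A - α / 2 * A ^ 2)) / (A' - A) := by
    rw [← neg_div_neg_eq]; ring_nf
  rw [e1] at hsec
  have hsec2 := (div_le_div_iff₀ hAA hwA).mp hsec
  set c := (ℓ A' - ℓ A) / (A' - A) with hcdef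
  have hcA : ℓ A' - ℓ A = c * (A' - A) := by
    rw [hcdef]; field_simp
  nlinarith [hsec2, hcA, hAA, hwA, mul_pos hAA hwA]

private lemma pl_key_left {α : ℝ} {S : Set ℝ} {ℓ : ℝ → ℝ}
    (hsc : ConvexOn ℝ S (fun z => ℓ z - α / 2 * z ^ 2))
    {A A' w : ℝ} (hA : A ∈ S) (hA' : A' ∈ S) (hw : w ∈ S)
    (h1 : A < A') (h2 : w ≤ A) :
    ℓ A + (ℓ A' - ℓ A) / (A' - A) * (w - A) + α / 2 * (w - A) * (w - A') ≤ ℓ w := by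
  rcases eq_or_lt_of_le h2 with rfl | h2
  · simp
  have hAA : (0:ℝ) < A' - A := by linarith
  have hwA : (0:ℝ) < A - w := by linarith
  have hsec := hsc.secant_mono hA hw hA' (by intro h; rw [h] at h2; exact lt_irrefl _ h2)
    (by intro h; rw [h] at h1; exact lt_irrefl _ h1) (by linarith)
  have e1 : ((ℓ w - α / 2 * w ^ 2) - (ℓ A - α / 2 * A ^ 2)) / (w - A)
      = ((ℓ A - α / 2 * A ^ 2) - (ℓ w - α / 2 * w ^ 2)) / (A - w) := by
    rw [← neg_div_neg_eq]; ring_nf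
  rw [e1] at hsec
  have hsec2 := (div_le_div_iff₀ hwA hAA).mp hsec
  set c := (ℓ A' - ℓ A) / (A' - A) with hcdef
  have hcA : ℓ A' - ℓ A = c * (A' - A) := by
    rw [hcdef]; field_simp
  nlinarith [hsec2, hcA, hAA, hwA, mul_pos hAA hwA]

private lemma grid_find_lt (m : ℕ) (s : Fin (m + 1) → ℝ) (z : ℝ)
    (h0 : s 0 ≤ z) (hz : z < s (Fin.last m)) :
    ∃ i : Fin m, s i.castSucc ≤ z ∧ z < s i.succ := by
  classical
  let P : ℕ → Prop := fun n => ∃ h : n < m + 1, s ⟨n, h⟩ ≤ z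
  have hP0 : P 0 := ⟨Nat.succ_pos m, by
    have e : (⟨0, Nat.succ_pos m⟩ : Fin (m + 1)) = 0 := rfl
    rw [e]; exact h0⟩
  obtain ⟨halt, hsa⟩ : P (Nat.findGreatest P m) := Nat.findGreatest_spec (Nat.zero_le m) hP0
  have haM : Nat.findGreatest P m ≤ m := Nat.findGreatest_le m
  have ham : Nat.findGreatest P m < m := by
    rcases Nat.lt_or_ge (Nat.findGreatest P m) m with h | h
    · exact h
    · exfalso
      have he : Nat.findGreatest P m = m := le_antisymm haM h
      have e : (⟨Nat.findGreatest P m, halt⟩ : Fin (m + 1)) = Fin.last m := by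
        apply Fin.ext; simp [he, Fin.last]
      rw [e] at hsa
      linarith
  refine ⟨⟨Nat.findGreatest P m, ham⟩, hsa, ?_⟩
  by_contra h
  push_neg at h
  have hp : P (Nat.findGreatest P m + 1) := ⟨by omega, h⟩
  exact Nat.findGreatest_is_greatest (n := m) (Nat.lt_succ_self _) ham hp

private lemma grid_find_gt (m : ℕ) (s : Fin (m + 1) → ℝ) (z : ℝ)
    (h0 : s 0 < z) (hz : z ≤ s (Fin.last m)) :
    ∃ i : Fin m, s i.castSucc < z ∧ z ≤ s i.succ := by
  classical
  let P : ℕ → Prop := fun n => ∃ h : n < m + 1, s ⟨n, h⟩ < z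
  have hP0 : P 0 := ⟨Nat.succ_pos m, by
    have e : (⟨0, Nat.succ_pos m⟩ : Fin (m + 1)) = 0 := rfl
    rw [e]; exact h0⟩
  obtain ⟨halt, hsa⟩ : P (Nat.findGreatest P m) := Nat.findGreatest_spec (Nat.zero_le m) hP0
  have haM : Nat.findGreatest P m ≤ m := Nat.findGreatest_le m
  have ham : Nat.findGreatest P m < m := by
    rcases Nat.lt_or_ge (Nat.findGreatest P m) m with h | h
    · exact h
    · exfalso
      have he : Nat.findGreatest P m = m := le_antisymm haM h
      have e : (⟨Nat.findGreatest P m, halt⟩ : Fin (m + 1)) = Fin.last m := by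
        apply Fin.ext; simp [he, Fin.last]
      rw [e] at hsa
      linarith
  refine ⟨⟨Nat.findGreatest P m, ham⟩, hsa, ?_⟩
  by_contra h
  push_neg at h
  have hp : P (Nat.findGreatest P m + 1) := ⟨by omega, h⟩
  exact Nat.findGreatest_is_greatest (n := m) (Nat.lt_succ_self _) ham hp

set_option maxHeartbeats 3200000

private lemma grid_find_le (m : ℕ) (hm : 1 ≤ m) (s : Fin (m + 1) → ℝ) (hmono : StrictMono s)
    (z : ℝ) (h0 : s 0 ≤ z) (hz : z ≤ s (Fin.last m)) :
    ∃ i : Fin m, s i.castSucc ≤ z ∧ z ≤ s i.succ := by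
  rcases lt_or_eq_of_le hz with hlt | heq
  · obtain ⟨i, h1, h2⟩ := grid_find_lt m s z h0 hlt
    exact ⟨i, h1, le_of_lt h2⟩
  · refine ⟨⟨m - 1, by omega⟩, ?_, ?_⟩
    · calc s (Fin.castSucc ⟨m - 1, by omega⟩) ≤ s (Fin.last m) :=
            hmono.monotone (Fin.le_last _)
        _ = z := heq.symm
    · have e : (⟨m - 1, by omega⟩ : Fin m).succ = Fin.last m := by
        apply Fin.ext
        simp [Fin.succ, Fin.last]
        omega
      rw [e, ← heq]

/-- **Piecewise-linearization of a strongly convex function is nearly strongly convex.**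
Given a grid `s 0 < s 1 < … < s m` with gaps at most `ε` and an `α`-strongly
convex `ℓ` on `[s 0, s m]`, the piecewise-linear interpolation `ℓdot` of `ℓ`
on the grid is `(α, ε)`-nearly strongly convex: any subgradient inequality
holds with slack `(α/2)·(max(|y−x|−ε,0))²`. -/
theorem piecewise_linearization_nearly_strongly_convex
    (m : ℕ) (hm : 1 ≤ m) (s : Fin (m + 1) → ℝ) (hmono : StrictMono s)
    (ε α : ℝ)
    (hgap : ∀ i : Fin m, s i.succ - s i.castSucc ≤ ε)
    (ℓ : ℝ → ℝ)
    (hsc : ConvexOn ℝ (Set.Icc (s 0) (s (Fin.last m))) (fun z => ℓ z - α / 2 * z ^ 2))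
    (ℓdot : ℝ → ℝ)
    (hdot : ∀ i : Fin m, ∀ z ∈ Set.Icc (s i.castSucc) (s i.succ),
      ℓdot z = ℓ (s i.castSucc) +
        (ℓ (s i.succ) - ℓ (s i.castSucc)) / (s i.succ - s i.castSucc) *
          (z - s i.castSucc)) :
    ∀ x ∈ Set.Icc (s 0) (s (Fin.last m)), ∀ y ∈ Set.Icc (s 0) (s (Fin.last m)),
      ∀ gsub : ℝ,
        (∀ z ∈ Set.Icc (s 0) (s (Fin.last m)), ℓdot x + gsub * (z - x) ≤ ℓdot z) →
        α / 2 * max (|y - x| - ε) 0 ^ 2 ≤ ℓdot y - ℓdot x - gsub * (y - x) := by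
  intro x hx y hy g hg
  have htriv := hg y hy
  rcases le_or_gt α 0 with hα | hα
  · nlinarith [sq_nonneg (max (|y - x| - ε) 0), le_max_right (|y - x| - ε) (0:ℝ)]
  rcases le_or_gt (|y - x|) ε with hsmall | hbig
  · rw [max_eq_right (by linarith)]
    have e : α / 2 * (0:ℝ) ^ 2 = 0 := by ring
    rw [e]; linarith
  have hε : 0 < ε := by
    have h1 := hgap ⟨0, hm⟩
    have h2 := hmono (Fin.castSucc_lt_succ (i := (⟨0, hm⟩ : Fin m)))
    linarith
  rw [max_eq_left (by linarith)]
  have memI : ∀ i : Fin (m + 1), s i ∈ Set.Icc (s 0) (s (Fin.last m)) :=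
    fun i => ⟨hmono.monotone (Fin.zero_le i), hmono.monotone (Fin.le_last i)⟩
  rcases lt_trichotomy x y with hxy | heq | hxy
  · -- case x < y
    have habs : |y - x| = y - x := abs_of_pos (by linarith)
    rw [habs] at hbig ⊢
    obtain ⟨a, haL, haR⟩ := grid_find_lt m s x hx.1 (lt_of_lt_of_le hxy hy.2)
    obtain ⟨b, hbL, hbR⟩ := grid_find_le m hm s hmono y hy.1 hy.2
    set A := s a.castSucc with hAdef
    set A' := s a.succ with hA'def
    set B := s b.castSucc with hBdef
    set B' := s b.succ with hB'def
    have hAA' : A < A' := hmono (Fin.castSucc_lt_succ (i := a))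
    have hBB' : B < B' := hmono (Fin.castSucc_lt_succ (i := b))
    have hgapa : A' - A ≤ ε := hgap a
    have hgapb : B' - B ≤ ε := hgap b
    have hAB : A < B := by linarith
    have hab : a < b := by
      have h1 : a.castSucc < b.castSucc := hmono.lt_iff_lt.mp hAB
      exact Fin.castSucc_lt_castSucc_iff.mp h1
    have hA'B : A' ≤ B := hmono.monotone (Fin.succ_le_castSucc_iff.mpr hab)
    have hA'B' : A' ≤ B' := by linarith
    set cA := (ℓ A' - ℓ A) / (A' - A) with hcAdef
    set cB := (ℓ B' - ℓ B) / (B' - B) with hcBdef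
    have hdx : ℓdot x = ℓ A + cA * (x - A) := hdot a x ⟨haL, le_of_lt haR⟩
    have hneA : A' - A ≠ 0 := sub_ne_zero.mpr (ne_of_gt hAA')
    have hneB : B' - B ≠ 0 := sub_ne_zero.mpr (ne_of_gt hBB')
    have hdA' : ℓdot A' = ℓ A' := by
      rw [hdot a A' ⟨le_of_lt hAA', le_refl A'⟩, div_mul_cancel₀ _ hneA]
      ring
    have hdy : ℓdot y = ℓ B + cB * (y - B) := hdot b y ⟨hbL, hbR⟩
    have hgA' : ℓdot x + g * (A' - x) ≤ ℓ A' := by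
      rw [← hdA']; exact hg A' (memI a.succ)
    have hcA : ℓ A' - ℓ A = cA * (A' - A) := by
      rw [hcAdef, div_mul_cancel₀ _ hneA]
    have hcB : ℓ B' - ℓ B = cB * (B' - B) := by
      rw [hcBdef, div_mul_cancel₀ _ hneB]
    have hcAg : g ≤ cA := by
      have h1 := hgA'
      rw [hdx] at h1
      nlinarith [h1, hcA, sub_pos.mpr haR]
    have hkB : ℓdot x + g * (B - x) + α / 2 * (B - A') * (B - A) ≤ ℓ B := by
      have hk := pl_key_right hsc (memI a.castSucc) (memI a.succ) (memI b.castSucc) hAA' hA'B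
      nlinarith [hk, hgA', hcAg, sub_nonneg.mpr hA'B]
    have hkB' : ℓdot x + g * (B' - x) + α / 2 * (B' - A') * (B' - A) ≤ ℓ B' := by
      have hk := pl_key_right hsc (memI a.castSucc) (memI a.succ) (memI b.succ) hAA' hA'B'
      nlinarith [hk, hgA', hcAg, sub_nonneg.mpr hA'B']
    have hquad : (B' - B) * (y - x - ε) ^ 2
        ≤ (B - A') * (B - A) * (B' - y) + (B' - A') * (B' - A) * (y - B) := by
      have e : (B - A') * (B - A) * (B' - y) + (B' - A') * (B' - A) * (y - B)
          = (B' - B) * ((y - A') * (y - A)) + (B' - B) * ((y - B) * (B' - y)) := by ring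
      have h0 : (0:ℝ) ≤ y - x - ε := by linarith
      have h1 : y - x - ε ≤ y - A' := by linarith
      have h2 : y - x - ε ≤ y - A := by linarith
      have h3 : (y - x - ε) * (y - x - ε) ≤ (y - A') * (y - A) :=
        mul_le_mul h1 h2 h0 (by linarith)
      have h4 : (B' - B) * ((y - x - ε) * (y - x - ε)) ≤ (B' - B) * ((y - A') * (y - A)) :=
        mul_le_mul_of_nonneg_left h3 (by linarith)
      have h5 : (0:ℝ) ≤ (B' - B) * ((y - B) * (B' - y)) :=
        mul_nonneg (by linarith) (mul_nonneg (by linarith) (by linarith))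
      rw [e]; nlinarith [h4, h5]
    have hstage1 : (ℓdot x + g * (y - x)) * (B' - B)
        + α / 2 * ((B - A') * (B - A) * (B' - y) + (B' - A') * (B' - A) * (y - B))
        ≤ ℓ B * (B' - y) + ℓ B' * (y - B) := by
      have h1 := mul_le_mul_of_nonneg_right hkB (by linarith : (0:ℝ) ≤ B' - y)
      have h2 := mul_le_mul_of_nonneg_right hkB' (by linarith : (0:ℝ) ≤ y - B)
      nlinarith [h1, h2]
    have h7 : ℓdot y * (B' - B) = ℓ B * (B' - y) + ℓ B' * (y - B) := by
      rw [hdy]; linear_combination (B - y) * hcB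
    have h6 : α / 2 * ((B' - B) * (y - x - ε) ^ 2)
        ≤ α / 2 * ((B - A') * (B - A) * (B' - y) + (B' - A') * (B' - A) * (y - B)) :=
      mul_le_mul_of_nonneg_left hquad (by linarith)
    have hfinal : 0 ≤ (ℓdot y - ℓdot x - g * (y - x) - α / 2 * (y - x - ε) ^ 2) * (B' - B) := by
      nlinarith [hstage1, h6, h7]
    nlinarith [hfinal, hBB']
  · exfalso
    rw [heq] at hbig
    simp at hbig
    linarith
  · -- case y < x
    have habs : |y - x| = x - y := by
      rw [abs_of_neg (by linarith : y - x < 0)]; ring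
    rw [habs] at hbig ⊢
    obtain ⟨a, haL, haR⟩ := grid_find_gt m s x (lt_of_le_of_lt hy.1 hxy) hx.2
    obtain ⟨b, hbL, hbR⟩ := grid_find_le m hm s hmono y hy.1 hy.2
    set A := s a.castSucc with hAdef
    set A' := s a.succ with hA'def
    set B := s b.castSucc with hBdef
    set B' := s b.succ with hB'def
    have hAA' : A < A' := hmono (Fin.castSucc_lt_succ (i := a))
    have hBB' : B < B' := hmono (Fin.castSucc_lt_succ (i := b))
    have hgapa : A' - A ≤ ε := hgap a
    have hgapb : B' - B ≤ ε := hgap b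
    have hB'A'lt : B' < A' := by linarith
    have hba : b < a := by
      have h1 : b.succ < a.succ := hmono.lt_iff_lt.mp hB'A'lt
      exact Fin.succ_lt_succ_iff.mp h1
    have hB'A : B' ≤ A := hmono.monotone (Fin.succ_le_castSucc_iff.mpr hba)
    have hBA : B ≤ A := by linarith
    set cA := (ℓ A' - ℓ A) / (A' - A) with hcAdef
    set cB := (ℓ B' - ℓ B) / (B' - B) with hcBdef
    have hneA : A' - A ≠ 0 := sub_ne_zero.mpr (ne_of_gt hAA')
    have hneB : B' - B ≠ 0 := sub_ne_zero.mpr (ne_of_gt hBB')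
    have hdx : ℓdot x = ℓ A + cA * (x - A) := hdot a x ⟨le_of_lt haL, haR⟩
    have hdA : ℓdot A = ℓ A := by
      rw [hdot a A ⟨le_refl A, le_of_lt hAA'⟩]
      simp [hAdef]
    have hdy : ℓdot y = ℓ B + cB * (y - B) := hdot b y ⟨hbL, hbR⟩
    have hgA : ℓdot x + g * (A - x) ≤ ℓ A := by
      rw [← hdA]; exact hg A (memI a.castSucc)
    have hcA : ℓ A' - ℓ A = cA * (A' - A) := by
      rw [hcAdef, div_mul_cancel₀ _ hneA]
    have hcB : ℓ B' - ℓ B = cB * (B' - B) := by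
      rw [hcBdef, div_mul_cancel₀ _ hneB]
    have hcAg : cA ≤ g := by
      have h1 := hgA
      rw [hdx] at h1
      nlinarith [h1, sub_pos.mpr haL]
    have hkB : ℓdot x + g * (B - x) + α / 2 * (B - A) * (B - A') ≤ ℓ B := by
      have hk := pl_key_left hsc (memI a.castSucc) (memI a.succ) (memI b.castSucc) hAA' hBA
      nlinarith [hk, hgA, hcAg, sub_nonneg.mpr hBA]
    have hkB' : ℓdot x + g * (B' - x) + α / 2 * (B' - A) * (B' - A') ≤ ℓ B' := by
      have hk := pl_key_left hsc (memI a.castSucc) (memI a.succ) (memI b.succ) hAA' hB'A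
      nlinarith [hk, hgA, hcAg, sub_nonneg.mpr hB'A]
    have hquad : (B' - B) * (x - y - ε) ^ 2
        ≤ (B - A) * (B - A') * (B' - y) + (B' - A) * (B' - A') * (y - B) := by
      have e : (B - A) * (B - A') * (B' - y) + (B' - A) * (B' - A') * (y - B)
          = (B' - B) * ((A - y) * (A' - y)) + (B' - B) * ((y - B) * (B' - y)) := by ring
      have h0 : (0:ℝ) ≤ x - y - ε := by linarith
      have h1 : x - y - ε ≤ A - y := by linarith
      have h2 : x - y - ε ≤ A' - y := by linarith
      have h3 : (x - y - ε) * (x - y - ε) ≤ (A - y) * (A' - y) :=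
        mul_le_mul h1 h2 h0 (by linarith)
      have h4 : (B' - B) * ((x - y - ε) * (x - y - ε)) ≤ (B' - B) * ((A - y) * (A' - y)) :=
        mul_le_mul_of_nonneg_left h3 (by linarith)
      have h5 : (0:ℝ) ≤ (B' - B) * ((y - B) * (B' - y)) :=
        mul_nonneg (by linarith) (mul_nonneg (by linarith) (by linarith))
      rw [e]; nlinarith [h4, h5]
    have hstage1 : (ℓdot x + g * (y - x)) * (B' - B)
        + α / 2 * ((B - A) * (B - A') * (B' - y) + (B' - A) * (B' - A') * (y - B))
        ≤ ℓ B * (B' - y) + ℓ B' * (y - B) := by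
      have h1 := mul_le_mul_of_nonneg_right hkB (by linarith : (0:ℝ) ≤ B' - y)
      have h2 := mul_le_mul_of_nonneg_right hkB' (by linarith : (0:ℝ) ≤ y - B)
      nlinarith [h1, h2]
    have h7 : ℓdot y * (B' - B) = ℓ B * (B' - y) + ℓ B' * (y - B) := by
      rw [hdy]; linear_combination (B - y) * hcB
    have h6 : α / 2 * ((B' - B) * (x - y - ε) ^ 2)
        ≤ α / 2 * ((B - A) * (B - A') * (B' - y) + (B' - A) * (B' - A') * (y - B)) :=
      mul_le_mul_of_nonneg_left hquad (by linarith)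
    have hfinal : 0 ≤ (ℓdot y - ℓdot x - g * (y - x) - α / 2 * (x - y - ε) ^ 2) * (B' - B) := by
      nlinarith [hstage1, h6, h7]
    nlinarith [hfinal, hBB']
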